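/- arXiv:1811.01083 — 4 statements merged into one kernel-verified Lean document; each statement's English description precedes it below -/
import Mathlib

section
/- δ^(k)(x) * H(x) = δ^(k)(x) for every k ∈ ℕ₀, where * is the Hörmander-type product on the algebra 𝒜 defined by F*G = lim_{ε↓0} F(x)·G(x+ε). -/
open MeasureTheory Filter Topology Set

noncomputable section

/-- Distributions, modelled as functionals; distributional identities are
tested against smooth compactly supported test functions via `dEq`. -/
abbrev SDist : Type := (ℝ → ℂ) → ℂ

/-- Test functions: smooth and compactly supported. -/
def IsTest (t : ℝ → ℂ) : Prop := ContDiff ℝ (⊤ : ℕ∞) t ∧ HasCompactSupport t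

/-- The regular distribution associated to a function. -/
def ofFun (f : ℝ → ℂ) : SDist := fun t => ∫ x, f x * t x

/-- Distributional derivative. -/
def Dop (F : SDist) : SDist := fun t => - F (deriv t)

/-- Iterated distributional derivative. -/
def Dn (n : ℕ) (F : SDist) : SDist := Dop^[n] F

/-- `deltaD n x₀` is the n-th derivative of the Dirac delta at `x₀`. -/
def deltaD (n : ℕ) (x₀ : ℝ) : SDist := fun t => (-1 : ℂ) ^ n * iteratedDeriv n t x₀

/-- Equality of distributions (tested on test functions). -/
def dEq (F G : SDist) : Prop := ∀ t, IsTest t → F t = G t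

/-- Equality of (restrictions of) distributions on a set Ω. -/
def dEqOn (Ω : Set ℝ) (F G : SDist) : Prop :=
  ∀ t, IsTest t → tsupport t ⊆ Ω → F t = G t

/-- Dual product of a distribution by a smooth function. -/
def mulSmooth (f : ℝ → ℂ) (F : SDist) : SDist := fun t => F (fun x => f x * t x)

/-- `shift ε F` is the distribution `F(· + ε)`. -/
def shift (ε : ℝ) (F : SDist) : SDist := fun t => F (fun x => t (x - ε))

/-- The Hörmander product of distributions with disjoint singular supports:
`P` is the product of `F` and `G` iff near every point one of the factors is
(given by) a smooth function and `P` is locally the corresponding dual product. -/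
def IsHProd (F G P : SDist) : Prop :=
  ∀ x : ℝ, ∃ Ω : Set ℝ, IsOpen Ω ∧ x ∈ Ω ∧
    ((∃ f, ContDiff ℝ (⊤ : ℕ∞) f ∧ dEqOn Ω F (ofFun f) ∧ dEqOn Ω P (mulSmooth f G)) ∨
     (∃ g, ContDiff ℝ (⊤ : ℕ∞) g ∧ dEqOn Ω G (ofFun g) ∧ dEqOn Ω P (mulSmooth g F)))

/-- The product `*` of the paper: `P = F * G` iff
`P = lim_{ε↓0} F(x)·G(x+ε)` in the distributional sense, where `·` is the
Hörmander product. -/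
def IsStar (F G P : SDist) : Prop :=
  ∃ Q : ℝ → SDist,
    (∀ᶠ ε in 𝓝[>] (0 : ℝ), IsHProd F (shift ε G) (Q ε)) ∧
    ∀ t, IsTest t → Tendsto (fun ε => Q ε t) (𝓝[>] (0 : ℝ)) (𝓝 (P t))

/-- Piecewise smooth functions: smooth off a finite set, with finite lateral
limits of all derivatives at the exceptional points. -/
def PiecewiseSmooth (f : ℝ → ℂ) : Prop :=
  ∃ I : Finset ℝ, ContDiffOn ℝ (⊤ : ℕ∞) f ((I : Set ℝ)ᶜ) ∧
    ∀ x₀ ∈ I, ∀ j : ℕ,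
      (∃ l, Tendsto (iteratedDeriv j f) (𝓝[<] x₀) (𝓝 l)) ∧
      (∃ l, Tendsto (iteratedDeriv j f) (𝓝[>] x₀) (𝓝 l))

/-- The space 𝒜: piecewise smooth functions together with all their
distributional derivatives. -/
def memA (F : SDist) : Prop :=
  ∃ (f : ℝ → ℂ) (k : ℕ), PiecewiseSmooth f ∧ dEq F (Dn k (ofFun f))

/-- Heaviside step function. -/
def Heav : ℝ → ℂ := fun x => if 0 < x then 1 else 0

/-- `H₋ = 1 - H`. -/
def HeavM : ℝ → ℂ := fun x => 1 - Heav x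

/-- The open cell `Ω_i = (x_i, x_{i+1})` (with `x_0 = -∞`, `x_{m+1} = +∞`)
determined by the points `x 0 < … < x (m-1)`. -/
def cell (m : ℕ) (x : Fin m → ℝ) (i : Fin (m + 1)) : Set ℝ :=
  {y | (∀ j : Fin m, (j : ℕ) < (i : ℕ) → x j < y) ∧
       ∀ j : Fin m, (i : ℕ) ≤ (j : ℕ) → y < x j}

/-- The distribution `Σᵢ fᵢ χ_{Ωᵢ} + Σᵢⱼ cᵢⱼ δ^{(j)}(x - xᵢ)`. -/
def repDist (m n : ℕ) (x : Fin m → ℝ) (f : Fin (m + 1) → ℝ → ℂ)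
    (c : Fin m → Fin (n + 1) → ℂ) : SDist :=
  fun t => (∑ i : Fin (m + 1), ofFun ((cell m x i).indicator (f i)) t)
    + ∑ i : Fin m, ∑ j : Fin (n + 1), c i j * deltaD (j : ℕ) (x i) t

/-- `G = D̃_I F`, the modified derivative `D̃_I F = DF + Σ_{x₀∈I} (F*δ_{x₀} − δ_{x₀}*F)`. -/
def IsDtilde (I : Finset ℝ) (F G : SDist) : Prop :=
  ∃ P Q : ℝ → SDist,
    (∀ x₀ ∈ I, IsStar F (deltaD 0 x₀) (P x₀) ∧ IsStar (deltaD 0 x₀) F (Q x₀)) ∧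
    dEq G (fun t => Dop F t + ∑ x₀ ∈ I, (P x₀ t - Q x₀ t))

/-- `G = D̃_I^k F`, the k-th iterate of the modified derivative. -/
def IsDtildeN (I : Finset ℝ) : ℕ → SDist → SDist → Prop
  | 0, F, G => dEq F G
  | k + 1, F, G => ∃ M, IsDtildeN I k F M ∧ IsDtilde I M G

/-- `G = Γ̂^{(j)} F = F*δ^{(j)} − δ^{(j)}*F`. -/
def IsGammaN (j : ℕ) (F G : SDist) : Prop :=
  ∃ P Q, IsStar F (deltaD j 0) P ∧ IsStar (deltaD j 0) F Q ∧
    dEq G (fun t => P t - Q t)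

/-- `Fh = F̂ ψ`, the interface operator
`F̂ψ = Σ_{i<m,j<n} (A_{ij} D^i δ̂₋ D^j − B_{ij} D^i δ̂₊ D^j) ψ`,
where `δ̂₋ G = G*δ` and `δ̂₊ G = δ*G`. -/
def IsFhat (m n : ℕ) (A B : Fin m → Fin n → ℂ) (ψ Fh : SDist) : Prop :=
  ∃ P Q : Fin n → SDist,
    (∀ j : Fin n, IsStar (Dn (j : ℕ) ψ) (deltaD 0 0) (P j) ∧
      IsStar (deltaD 0 0) (Dn (j : ℕ) ψ) (Q j)) ∧
    dEq Fh (fun t => ∑ i : Fin m, ∑ j : Fin n,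
      (A i j * Dn (i : ℕ) (P j) t - B i j * Dn (i : ℕ) (Q j) t))

/-- `g` is the family of L² representatives of the distributional derivatives of
`ψ` up to order `n`; this expresses `ψ ∈ W₂ⁿ(ℝ)`. -/
def SobRep (n : ℕ) (ψ : ℝ → ℂ) (g : ℕ → ℝ → ℂ) : Prop :=
  g 0 = ψ ∧ ∀ i ≤ n, MemLp (g i) 2 volume ∧ dEq (Dn i (ofFun ψ)) (ofFun (g i))
/-- δ^(k)(x) * H(x) = δ^(k)(x) for every k ∈ ℕ₀. -/
theorem delta_star_heaviside (k : ℕ) :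
    IsStar (deltaD k 0) (ofFun Heav) (deltaD k 0) := by
  refine ⟨fun _ => deltaD k 0, ?_, fun t _ => tendsto_const_nhds⟩
  filter_upwards [self_mem_nhdsWithin] with ε (hε : ε ∈ Ioi (0:ℝ))
  rw [Set.mem_Ioi] at hε
  intro x
  rcases lt_or_ge x 0 with hx | hx
  · refine ⟨Iio 0, isOpen_Iio, hx, Or.inl ⟨0, contDiff_const, ?_, ?_⟩⟩
    · intro t ht hsupp
      have h0 : (0:ℝ) ∉ tsupport t := fun h => lt_irrefl 0 (Set.mem_Iio.mp (hsupp h))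
      have ht0 : t =ᶠ[𝓝 (0:ℝ)] 0 := notMem_tsupport_iff_eventuallyEq.mp h0
      have hid : iteratedDeriv k t 0 = 0 := by
        have hz : iteratedFDeriv ℝ k t 0 = 0 := by
          by_contra h
          exact h0 (support_iteratedFDeriv_subset k
            (by simpa [Function.mem_support] using h))
        simp [iteratedDeriv, hz]
      simp [deltaD, ofFun, hid]
    · intro t ht hsupp
      have h0 : (0:ℝ) ∉ tsupport t := fun h => lt_irrefl 0 (Set.mem_Iio.mp (hsupp h))
      have ht0 : t =ᶠ[𝓝 (0:ℝ)] 0 := notMem_tsupport_iff_eventuallyEq.mp h0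
      have hid : iteratedDeriv k t 0 = 0 := by
        have hz : iteratedFDeriv ℝ k t 0 = 0 := by
          by_contra h
          exact h0 (support_iteratedFDeriv_subset k
            (by simpa [Function.mem_support] using h))
        simp [iteratedDeriv, hz]
      simp [deltaD, mulSmooth, shift, ofFun, hid]
  · refine ⟨Ioi (-ε), isOpen_Ioi, Set.mem_Ioi.mpr (by linarith), Or.inr ⟨fun _ => 1, contDiff_const, ?_, ?_⟩⟩
    · intro t ht hsupp
      show ofFun Heav (fun x => t (x - ε)) = ofFun (fun _ => 1) t
      have key : ∀ x : ℝ, Heav x * t (x - ε) = t (x - ε) := by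
        intro x
        rcases lt_or_ge 0 x with h | h
        · simp [Heav, h]
        · have : x - ε ∉ tsupport t := by
            intro hmem
            have := hsupp hmem
            rw [Set.mem_Ioi] at this
            linarith
          simp [Heav, image_eq_zero_of_notMem_tsupport this, not_lt.mpr h]
      unfold ofFun
      simp only [key, one_mul]
      exact MeasureTheory.integral_sub_right_eq_self (fun y => t y) ε
    · intro t ht hsupp
      show deltaD k 0 t = deltaD k 0 (fun x => (1:ℂ) * t x)
      simp
end
end

section
/- H(x) * δ^(k)(x) = 0 for every k ∈ ℕ₀. -/
open MeasureTheory Filter Topology Set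

noncomputable section

lemma iteratedDeriv_zero_fun' (k : ℕ) (x : ℝ) :
    iteratedDeriv k (fun _ : ℝ => (0 : ℂ)) x = 0 := by
  rw [iteratedDeriv_eq_iteratedFDeriv, iteratedFDeriv_zero_fun]
  rfl

/-- H(x) * δ^(k)(x) = 0 for every k ∈ ℕ₀. -/
theorem heaviside_star_delta (k : ℕ) :
    IsStar (ofFun Heav) (deltaD k 0) (0 : SDist) := by
  refine ⟨fun _ => (0 : SDist), ?_, ?_⟩
  · filter_upwards [self_mem_nhdsWithin] with ε (hε : 0 < ε)
    intro x
    rcases lt_or_ge x 0 with hx | hx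
    · -- x < 0 : Heaviside is 0 near x
      refine ⟨Iio 0, isOpen_Iio, hx, Or.inl ⟨fun _ => 0, contDiff_const, ?_, ?_⟩⟩
      · intro t ht hsupp
        have h0 : (fun y => Heav y * t y) = fun _ => (0 : ℂ) := by
          funext y
          by_cases hy : 0 < y
          · have : t y = 0 := by
              by_contra hne
              exact absurd (hsupp (subset_tsupport t hne)) (by simpa using hy.le)
            simp [this]
          · simp [Heav, hy]
        simp only [ofFun, h0]
        simp
      · intro t ht hsupp
        show (0 : ℂ) = shift ε (deltaD k 0) (fun y => (0 : ℂ) * t y)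
        simp only [shift, deltaD, zero_mul]
        rw [iteratedDeriv_zero_fun']
        simp
    · -- x ≥ 0 : shifted delta (at -ε) is 0 near x
      refine ⟨Ioi (-ε), isOpen_Ioi, by simp [lt_of_lt_of_le (neg_neg_iff_pos.2 hε) hx],
        Or.inr ⟨fun _ => 0, contDiff_const, ?_, ?_⟩⟩
      · intro t ht hsupp
        show shift ε (deltaD k 0) t = ofFun (fun _ => 0) t
        have hne : (-ε : ℝ) ∉ tsupport t := fun h => lt_irrefl (-ε) (hsupp h)
        have hev : (fun y : ℝ => t (y - ε)) =ᶠ[𝓝 (0 : ℝ)] (fun _ => (0 : ℂ)) := by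
          have hopen : IsOpen (tsupport t)ᶜ := (isClosed_tsupport t).isOpen_compl
          have : ∀ᶠ y in 𝓝 (-ε : ℝ), t y = 0 := by
            filter_upwards [hopen.mem_nhds hne] with y hy
            exact image_eq_zero_of_notMem_tsupport hy
          have hcont : Continuous (fun y : ℝ => y - ε) := by continuity
          have h0 : Tendsto (fun y : ℝ => y - ε) (𝓝 0) (𝓝 (-ε)) := by
            simpa using hcont.tendsto 0
          filter_upwards [h0.eventually this] with y hy using hy
        simp only [shift, deltaD, ofFun]
        rw [hev.iteratedDeriv_eq, iteratedDeriv_zero_fun']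
        simp
      · intro t ht hsupp
        show (0 : ℂ) = ofFun Heav (fun y => (0 : ℂ) * t y)
        simp [ofFun]
  · intro t ht
    exact mod_cast (tendsto_const_nhds : Tendsto (fun _ : ℝ => (0 : ℂ)) _ (𝓝 0))
end
end

section
/- δ(x) * (−1/2 + H(x)) = (1/2) δ(x). In particular, the * product of an even distribution by an odd distribution can be even. -/
open MeasureTheory Filter Topology Set

noncomputable section

/-- δ(x) * (−1/2 + H(x)) = (1/2) δ(x). -/
theorem delta_star_shifted_heaviside :
    IsStar (deltaD 0 0) (ofFun (fun x => -(1/2 : ℂ) + Heav x))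
      (fun t => (1/2 : ℂ) * deltaD 0 0 t) := by
  refine ⟨fun _ t => (1/2 : ℂ) * t 0, ?_, ?_⟩
  · filter_upwards [self_mem_nhdsWithin] with ε (hε : 0 < ε)
    intro x
    by_cases hx : -ε < x
    · refine ⟨Ioi (-ε), isOpen_Ioi, hx, Or.inr ⟨fun _ => (1/2 : ℂ), contDiff_const, ?_, ?_⟩⟩
      · intro t _ hts
        show (∫ y, (-(1/2 : ℂ) + Heav y) * t (y - ε)) = ∫ y, (1/2 : ℂ) * t y
        rw [show (fun y => (-(1/2 : ℂ) + Heav y) * t (y - ε))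
              = (fun y => (-(1/2 : ℂ) + Heav (y + ε)) * t y) ∘ (fun y => y - ε) by
            funext y; simp]
        rw [show ((fun y => (-(1/2 : ℂ) + Heav (y + ε)) * t y) ∘ fun y => y - ε)
              = fun y => (fun y => (-(1/2 : ℂ) + Heav (y + ε)) * t y) (y - ε) from rfl,
            integral_sub_right_eq_self (fun y => (-(1/2 : ℂ) + Heav (y + ε)) * t y) ε]
        congr 1; funext y
        by_cases hty : t y = 0
        · simp [hty]
        · have hy : y ∈ Ioi (-ε) := hts (subset_tsupport t hty)
          have hyε : (0:ℝ) < y + ε := by have := mem_Ioi.mp hy; linarith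
          have : Heav (y + ε) = 1 := by simp [Heav, hyε]
          rw [this]; ring_nf
      · intro t _ _
        show (1/2 : ℂ) * t 0 = deltaD 0 0 (fun x => (1/2 : ℂ) * t x)
        simp [deltaD, iteratedDeriv_zero]
    · refine ⟨Iio 0, isOpen_Iio, by push_neg at hx; simp only [mem_Iio]; linarith,
        Or.inl ⟨fun _ => (0 : ℂ), contDiff_const, ?_, ?_⟩⟩
      · intro t _ hts
        have ht0 : t 0 = 0 := by
          by_contra h
          exact absurd (hts (subset_tsupport t h)) (by simp)
        show deltaD 0 0 t = ∫ y, (0 : ℂ) * t y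
        simp [deltaD, iteratedDeriv_zero, ht0]
      · intro t _ hts
        have ht0 : t 0 = 0 := by
          by_contra h
          exact absurd (hts (subset_tsupport t h)) (by simp)
        show (1/2 : ℂ) * t 0 = shift ε (ofFun fun x => -(1/2 : ℂ) + Heav x) (fun x => 0 * t x)
        simp [ht0, shift, ofFun]
  · intro t _
    simp only [deltaD, pow_zero, iteratedDeriv_zero, one_mul]
    exact tendsto_const_nhds
end
end

section
/- Explicit product formula: if F = Σ_i f_i χ_{Ω_i} + Σ_{i,j} F_{ij} δ^(j)(x−x_i) and G = Σ_i g_i χ_{Ω_i} + Σ_{i,j} G_{ij} δ^(j)(x−x_i) (with common singular support points x₁<…<x_m and intervals Ω_i = (x_i,x_{i+1})), then F*G = Σ_i f_i g_i χ_{Ω_i} + Σ_{i=1}^m Σ_{j=0}^n [F_{ij} g_i + G_{ij} f_{i−1}] δ^(j)(x−x_i); in particular F*G ∈ 𝒜. -/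
open MeasureTheory Filter Topology Set

noncomputable section

namespace SEF

open MeasureTheory Filter Topology Set

lemma cell_isOpen (m : ℕ) (x : Fin m → ℝ) (i : Fin (m + 1)) : IsOpen (cell m x i) := by
  have h : cell m x i = ⋂ j : Fin m,
      ((if (j : ℕ) < (i : ℕ) then Ioi (x j) else Set.univ) ∩
       (if (i : ℕ) ≤ (j : ℕ) then Iio (x j) else Set.univ)) := by
    ext y
    simp only [cell, Set.mem_setOf_eq, Set.mem_iInter, Set.mem_inter_iff]
    constructor
    · rintro ⟨h1, h2⟩ j
      constructor
      · split_ifs with hj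
        · exact h1 j hj
        · trivial
      · split_ifs with hj
        · exact h2 j hj
        · trivial
    · intro h
      constructor
      · intro j hj; have := (h j).1; rwa [if_pos hj] at this
      · intro j hj; have := (h j).2; rwa [if_pos hj] at this
  rw [h]
  refine isOpen_iInter_of_finite fun j => IsOpen.inter ?_ ?_
  · split_ifs
    · exact isOpen_Ioi
    · exact isOpen_univ
  · split_ifs
    · exact isOpen_Iio
    · exact isOpen_univ

lemma not_mem_cell (m : ℕ) (x : Fin m → ℝ) (k : Fin m) (i : Fin (m + 1)) :
    x k ∉ cell m x i := by
  intro h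
  rcases lt_or_ge (k : ℕ) (i : ℕ) with hk | hk
  · exact lt_irrefl _ (h.1 k hk)
  · exact lt_irrefl _ (h.2 k hk)

lemma cell_unique {m : ℕ} {x : Fin m → ℝ} {i i' : Fin (m + 1)} {y : ℝ}
    (h : y ∈ cell m x i) (h' : y ∈ cell m x i') : i = i' := by
  by_contra hne
  rcases lt_trichotomy (i : ℕ) (i' : ℕ) with hlt | heq | hlt
  · have hm : (i : ℕ) < m := lt_of_lt_of_le hlt (Nat.lt_succ_iff.mp i'.isLt)
    have h1 : y < x ⟨i, hm⟩ := h.2 ⟨i, hm⟩ (le_refl _)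
    have h2 : x ⟨i, hm⟩ < y := h'.1 ⟨i, hm⟩ hlt
    linarith
  · exact hne (Fin.ext heq)
  · have hm : (i' : ℕ) < m := lt_of_lt_of_le hlt (Nat.lt_succ_iff.mp i.isLt)
    have h1 : y < x ⟨i', hm⟩ := h'.2 ⟨i', hm⟩ (le_refl _)
    have h2 : x ⟨i', hm⟩ < y := h.1 ⟨i', hm⟩ hlt
    linarith

lemma exists_mem_cell {m : ℕ} {x : Fin m → ℝ} (hx : StrictMono x) {y : ℝ}
    (hy : ∀ k, y ≠ x k) : ∃ i : Fin (m + 1), y ∈ cell m x i := by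
  classical
  set s : Finset (Fin m) := Finset.univ.filter (fun j => x j < y) with hs
  refine ⟨⟨s.card, Nat.lt_succ_of_le (le_trans (Finset.card_le_univ s) (by simp))⟩, ?_, ?_⟩
  · intro j hj
    by_contra hxy
    push_neg at hxy
    have hylt : y < x j := lt_of_le_of_ne hxy (hy j)
    have hsub : s ⊆ Finset.univ.filter (fun j' => j' < j) := by
      intro j' hj'
      simp only [hs, Finset.mem_filter, Finset.mem_univ, true_and] at hj' ⊢
      exact hx.lt_iff_lt.mp (lt_trans hj' hylt)
    have hcard : s.card ≤ (Finset.univ.filter (fun j' => j' < j)).card :=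
      Finset.card_le_card hsub
    have : (Finset.univ.filter (fun j' => j' < j)).card = (j : ℕ) := by
      have he : Finset.univ.filter (fun j' => j' < j) = Finset.Iio j := by
        ext j'; simp
      rw [he, Fin.card_Iio]
    simp only [this] at hcard
    exact absurd hj (not_lt.mpr hcard)
  · intro j hj
    by_contra hxy
    push_neg at hxy
    have hlt : x j < y := lt_of_le_of_ne hxy fun h => (hy j) h.symm
    have hsub : Finset.univ.filter (fun j' => j' ≤ j) ⊆ s := by
      intro j' hj'
      simp only [hs, Finset.mem_filter, Finset.mem_univ, true_and] at hj' ⊢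
      exact lt_of_le_of_lt (hx.monotone hj') hlt
    have hcard : (Finset.univ.filter (fun j' => j' ≤ j)).card ≤ s.card :=
      Finset.card_le_card hsub
    have : (Finset.univ.filter (fun j' => j' ≤ j)).card = (j : ℕ) + 1 := by
      have he : Finset.univ.filter (fun j' => j' ≤ j) = Finset.Iic j := by
        ext j'; simp
      rw [he, Fin.card_Iic]
    have hj2 : s.card ≤ (j : ℕ) := hj
    omega

lemma mem_cell_shift {m : ℕ} (x : Fin m → ℝ) (ε : ℝ) (i : Fin (m + 1)) (y : ℝ) :
    y ∈ cell m (fun j => x j - ε) i ↔ y + ε ∈ cell m x i := by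
  simp only [cell, Set.mem_setOf_eq]
  constructor
  · rintro ⟨h1, h2⟩
    exact ⟨fun j hj => by linarith [h1 j hj], fun j hj => by linarith [h2 j hj]⟩
  · rintro ⟨h1, h2⟩
    exact ⟨fun j hj => by linarith [h1 j hj], fun j hj => by linarith [h2 j hj]⟩

lemma xs_strictMono {m : ℕ} {x : Fin m → ℝ} (hx : StrictMono x) (ε : ℝ) :
    StrictMono (fun j => x j - ε) := fun a b h => by
  simpa using sub_lt_sub_right (hx h) ε

/-! ### Regular parts -/

def Freg (m : ℕ) (x : Fin m → ℝ) (f : Fin (m + 1) → ℝ → ℂ) : ℝ → ℂ :=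
  fun y => ∑ i : Fin (m + 1), (cell m x i).indicator (f i) y

lemma Freg_of_mem {m : ℕ} {x : Fin m → ℝ} {f : Fin (m + 1) → ℝ → ℂ} {y : ℝ}
    {i : Fin (m + 1)} (h : y ∈ cell m x i) : Freg m x f y = f i y := by
  rw [Freg, Finset.sum_eq_single i]
  · exact Set.indicator_of_mem h (f i)
  · intro k _ hk
    apply Set.indicator_of_notMem
    exact fun hmem => hk (cell_unique hmem h)
  · simp

lemma Freg_of_not_mem {m : ℕ} {x : Fin m → ℝ} {f : Fin (m + 1) → ℝ → ℂ} {y : ℝ}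
    (h : ∀ i, y ∉ cell m x i) : Freg m x f y = 0 := by
  rw [Freg]
  exact Finset.sum_eq_zero fun i _ => Set.indicator_of_notMem (h i) (f i)

lemma Freg_measurable {m : ℕ} {x : Fin m → ℝ} {f : Fin (m + 1) → ℝ → ℂ}
    (hf : ∀ i, Continuous (f i)) : Measurable (Freg m x f) :=
  Finset.measurable_sum _ fun i _ =>
    ((hf i).measurable).indicator (cell_isOpen m x i).measurableSet

/-! ### Test functions -/

lemma isTest_shift {t : ℝ → ℂ} (ht : IsTest t) (ε : ℝ) :
    IsTest (fun y => t (y - ε)) := by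
  refine ⟨ht.1.comp (contDiff_id.sub contDiff_const), ?_⟩
  exact ht.2.comp_homeomorph (Homeomorph.subRight ε)

lemma isTest_mul {c t : ℝ → ℂ} (hc : ContDiff ℝ (⊤ : ℕ∞) c) (ht : IsTest t) :
    IsTest (fun y => c y * t y) :=
  ⟨hc.mul ht.1, ht.2.mul_left⟩

/-! ### Vanishing of iterated derivatives -/

lemma itD_zero_fun (j : ℕ) (y : ℝ) : iteratedDeriv j (fun _ : ℝ => (0 : ℂ)) y = 0 := by
  induction j generalizing y with
  | zero => simp
  | succ j ih =>
    rw [iteratedDeriv_succ']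
    have h : deriv (fun _ : ℝ => (0 : ℂ)) = fun _ : ℝ => (0 : ℂ) := by
      funext z; simp
    rw [h]; exact ih y

lemma itD_of_eventually_zero {u : ℝ → ℂ} {x₀ : ℝ} (h : ∀ᶠ y in 𝓝 x₀, u y = 0)
    (j : ℕ) : iteratedDeriv j u x₀ = 0 := by
  have h0 : u =ᶠ[𝓝 x₀] (fun _ => (0 : ℂ)) := h
  rw [Filter.EventuallyEq.iteratedDeriv_eq j h0]
  exact itD_zero_fun j x₀

lemma eventually_zero_of_not_mem_tsupport {t : ℝ → ℂ} {x₀ : ℝ} (h : x₀ ∉ tsupport t) :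
    ∀ᶠ y in 𝓝 x₀, t y = 0 := by
  filter_upwards [(isClosed_tsupport t).isOpen_compl.mem_nhds h] with y hy
  exact image_eq_zero_of_notMem_tsupport hy

lemma itD_tsupport {t : ℝ → ℂ} {x₀ : ℝ} (h : x₀ ∉ tsupport t) (j : ℕ) :
    iteratedDeriv j t x₀ = 0 :=
  itD_of_eventually_zero (eventually_zero_of_not_mem_tsupport h) j

lemma itD_mul_tsupport {c t : ℝ → ℂ} {x₀ : ℝ} (h : x₀ ∉ tsupport t) (j : ℕ) :
    iteratedDeriv j (fun y => c y * t y) x₀ = 0 := by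
  refine itD_of_eventually_zero ?_ j
  filter_upwards [eventually_zero_of_not_mem_tsupport h] with y hy
  simp [hy]

/-! ### Integrability -/

lemma integrable_ind_mul {S : Set ℝ} (hS : MeasurableSet S) {h u : ℝ → ℂ}
    (hh : Continuous h) (hu : Continuous u) (hsupp : HasCompactSupport u) :
    Integrable (fun y => S.indicator h y * u y) := by
  have he : (fun y => S.indicator h y * u y) = S.indicator (fun y => h y * u y) := by
    funext y
    by_cases hy : y ∈ S
    · simp [Set.indicator_of_mem hy]
    · simp [Set.indicator_of_notMem hy]
  rw [he]
  exact ((hh.mul hu).integrable_of_hasCompactSupport hsupp.mul_left).indicator hS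

/-! ### Iterated derivatives: sums and parametrized continuity -/

lemma itD_add {j : ℕ} {A B : ℝ → ℂ} (hA : ContDiff ℝ (⊤ : ℕ∞) A)
    (hB : ContDiff ℝ (⊤ : ℕ∞) B) (y : ℝ) :
    iteratedDeriv j (fun z => A z + B z) y = iteratedDeriv j A y + iteratedDeriv j B y := by
  have hA' : ContDiffOn ℝ j A Set.univ := (hA.of_le (by exact_mod_cast le_top)).contDiffOn
  have hB' : ContDiffOn ℝ j B Set.univ := (hB.of_le (by exact_mod_cast le_top)).contDiffOn
  have h := iteratedDerivWithin_add (h := uniqueDiffOn_univ) (hx := Set.mem_univ y)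
    (hA'.contDiffWithinAt (Set.mem_univ y)) (hB'.contDiffWithinAt (Set.mem_univ y))
  show iteratedDeriv j (A + B) y = _
  simpa [iteratedDerivWithin_univ] using h

lemma contDiff_deriv_top {u : ℝ → ℂ} (hu : ContDiff ℝ (⊤ : ℕ∞) u) :
    ContDiff ℝ (⊤ : ℕ∞) (deriv u) :=
  (contDiff_infty_iff_deriv.mp hu).2

lemma differentiable_of_top {u : ℝ → ℂ} (hu : ContDiff ℝ (⊤ : ℕ∞) u) :
    Differentiable ℝ u :=
  hu.differentiable (by simp)

lemma contDiff_shift_mul {u v : ℝ → ℂ} (hu : ContDiff ℝ (⊤ : ℕ∞) u)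
    (hv : ContDiff ℝ (⊤ : ℕ∞) v) (ε : ℝ) :
    ContDiff ℝ (⊤ : ℕ∞) (fun y => u (y + ε) * v y) :=
  (hu.comp (contDiff_id.add contDiff_const)).mul hv

/-- Continuity in the shift parameter of iterated derivatives of
`y ↦ u (y + ε) * v y` at a fixed point. -/
lemma contA (j : ℕ) : ∀ (u v : ℝ → ℂ), ContDiff ℝ (⊤ : ℕ∞) u → ContDiff ℝ (⊤ : ℕ∞) v →
    ∀ x₀ : ℝ, Continuous (fun ε : ℝ => iteratedDeriv j (fun y => u (y + ε) * v y) x₀) := by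
  induction j with
  | zero =>
    intro u v hu hv x₀
    simp only [iteratedDeriv_zero]
    exact (hu.continuous.comp (continuous_const.add continuous_id)).mul continuous_const
  | succ j ih =>
    intro u v hu hv x₀
    have hder : ∀ ε : ℝ, deriv (fun y => u (y + ε) * v y)
        = fun y => deriv u (y + ε) * v y + u (y + ε) * deriv v y := by
      intro ε
      funext y
      have hd1 : DifferentiableAt ℝ (fun z : ℝ => u (z + ε)) y :=
        (differentiable_of_top (hu.comp (contDiff_id.add contDiff_const))) y
      have hd2 : DifferentiableAt ℝ v y := differentiable_of_top hv y
      rw [deriv_fun_mul hd1 hd2, deriv_comp_add_const]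
    have hre : (fun ε : ℝ => iteratedDeriv (j + 1) (fun y => u (y + ε) * v y) x₀)
        = fun ε : ℝ => iteratedDeriv j (fun y => deriv u (y + ε) * v y) x₀
            + iteratedDeriv j (fun y => u (y + ε) * deriv v y) x₀ := by
      funext ε
      rw [iteratedDeriv_succ', hder ε]
      exact itD_add (contDiff_shift_mul (contDiff_deriv_top hu) hv ε)
        (contDiff_shift_mul hu (contDiff_deriv_top hv) ε) x₀
    rw [hre]
    exact (ih (deriv u) v (contDiff_deriv_top hu) hv x₀).add
      (ih u (deriv v) hu (contDiff_deriv_top hv) x₀)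

/-! ### The approximating product distribution -/

def Qd (m n : ℕ) (x : Fin m → ℝ) (f g : Fin (m + 1) → ℝ → ℂ)
    (Fc Gc : Fin m → Fin (n + 1) → ℂ) (ε : ℝ) : SDist := fun t =>
  (∫ y, Freg m x f y * Freg m (fun j => x j - ε) (fun k z => g k (z + ε)) y * t y)
  + ∑ i : Fin m, ∑ j : Fin (n + 1),
      (Fc i j * ((-1 : ℂ) ^ (j : ℕ) *
          iteratedDeriv (j : ℕ) (fun y => g i.succ (y + ε) * t y) (x i))
       + Gc i j * ((-1 : ℂ) ^ (j : ℕ) *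
          iteratedDeriv (j : ℕ) (fun y => f i.castSucc y * t y) (x i - ε)))

lemma repDist_apply (m n : ℕ) (x : Fin m → ℝ) (f : Fin (m + 1) → ℝ → ℂ)
    (c : Fin m → Fin (n + 1) → ℂ) (t : ℝ → ℂ) :
    repDist m n x f c t
      = (∑ i : Fin (m + 1), ∫ y, (cell m x i).indicator (f i) y * t y)
        + ∑ i : Fin m, ∑ j : Fin (n + 1),
            c i j * ((-1 : ℂ) ^ (j : ℕ) * iteratedDeriv (j : ℕ) t (x i)) := rfl

section Main

variable {m n : ℕ} {x : Fin m → ℝ} {f g : Fin (m + 1) → ℝ → ℂ}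
  {Fc Gc : Fin m → Fin (n + 1) → ℂ} {F G : SDist} {ε : ℝ}

lemma shift_apply (hG : dEq G (repDist m n x g Gc)) (ε : ℝ) {t : ℝ → ℂ} (ht : IsTest t) :
    shift ε G t
      = (∑ k : Fin (m + 1),
          ∫ y, (cell m (fun j => x j - ε) k).indicator (fun z => g k (z + ε)) y * t y)
        + ∑ k : Fin m, ∑ j : Fin (n + 1),
            Gc k j * ((-1 : ℂ) ^ (j : ℕ) * iteratedDeriv (j : ℕ) t (x k - ε)) := by
  have h0 : shift ε G t = repDist m n x g Gc (fun y => t (y - ε)) :=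
    hG _ (isTest_shift ht ε)
  rw [h0, repDist_apply]
  congr 1
  · refine Finset.sum_congr rfl fun k _ => ?_
    have hshift := MeasureTheory.integral_add_right_eq_self (μ := volume)
      (fun y => (cell m x k).indicator (g k) y * t (y - ε)) ε
    rw [← hshift]
    congr 1
    funext y
    by_cases hy : y + ε ∈ cell m x k
    · rw [Set.indicator_of_mem hy, Set.indicator_of_mem ((mem_cell_shift x ε k y).mpr hy)]
      rw [add_sub_cancel_right]
    · rw [Set.indicator_of_notMem hy,
        Set.indicator_of_notMem (fun hc => hy ((mem_cell_shift x ε k y).mp hc))]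
      simp
  · refine Finset.sum_congr rfl fun k _ => Finset.sum_congr rfl fun j _ => ?_
    have h1 : (fun y : ℝ => t (y - ε)) = fun y => t (y + (-ε)) := by
      funext y; rw [sub_eq_add_neg]
    rw [h1, iteratedDeriv_comp_add_const]
    simp [sub_eq_add_neg]

lemma loc_F (hF : dEq F (repDist m n x f Fc)) (i : Fin (m + 1)) {t : ℝ → ℂ}
    (ht : IsTest t) (hsupp : tsupport t ⊆ cell m x i) :
    F t = ∫ y, f i y * t y := by
  rw [hF t ht, repDist_apply]
  have hts : ∀ y, y ∉ cell m x i → t y = 0 := fun y hy => by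
    by_contra h0
    exact hy (hsupp (subset_tsupport t (by simpa [Function.mem_support] using h0)))
  have hdelta : ∀ k : Fin m, ∀ j : Fin (n + 1),
      iteratedDeriv (j : ℕ) t (x k) = 0 := fun k j =>
    itD_tsupport (fun hmem => not_mem_cell m x k i (hsupp hmem)) _
  have hmain : (∑ k : Fin (m + 1), ∫ y, (cell m x k).indicator (f k) y * t y)
      = ∫ y, f i y * t y := by
    rw [Finset.sum_eq_single i]
    · congr 1
      funext y
      by_cases hy : y ∈ cell m x i
      · rw [Set.indicator_of_mem hy]
      · rw [Set.indicator_of_notMem hy, hts y hy, mul_zero, mul_zero]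
    · intro k _ hk
      have hzero : (fun y => (cell m x k).indicator (f k) y * t y) = fun _ => (0 : ℂ) := by
        funext y
        by_cases hy : y ∈ cell m x k
        · rw [hts y (fun hyi => hk (cell_unique hy hyi)), mul_zero]
        · rw [Set.indicator_of_notMem hy, zero_mul]
      rw [hzero, integral_zero]
    · simp
  rw [hmain]
  simp [hdelta]

lemma loc_G (hG : dEq G (repDist m n x g Gc)) (i : Fin (m + 1)) {t : ℝ → ℂ}
    (ht : IsTest t) (hsupp : tsupport t ⊆ cell m (fun j => x j - ε) i) :
    shift ε G t = ∫ y, g i (y + ε) * t y := by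
  rw [shift_apply hG ε ht]
  have hts : ∀ y, y ∉ cell m (fun j => x j - ε) i → t y = 0 := fun y hy => by
    by_contra h0
    exact hy (hsupp (subset_tsupport t (by simpa [Function.mem_support] using h0)))
  have hdelta : ∀ k : Fin m, ∀ j : Fin (n + 1),
      iteratedDeriv (j : ℕ) t (x k - ε) = 0 := fun k j =>
    itD_tsupport (fun hmem => not_mem_cell m (fun j => x j - ε) k i (hsupp hmem)) _
  have hmain : (∑ k : Fin (m + 1),
      ∫ y, (cell m (fun j => x j - ε) k).indicator (fun z => g k (z + ε)) y * t y)
      = ∫ y, g i (y + ε) * t y := by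
    rw [Finset.sum_eq_single i]
    · congr 1
      funext y
      by_cases hy : y ∈ cell m (fun j => x j - ε) i
      · rw [Set.indicator_of_mem hy]
      · rw [Set.indicator_of_notMem hy, hts y hy, mul_zero, mul_zero]
    · intro k _ hk
      have hzero : (fun y => (cell m (fun j => x j - ε) k).indicator (fun z => g k (z + ε)) y * t y)
          = fun _ => (0 : ℂ) := by
        funext y
        by_cases hy : y ∈ cell m (fun j => x j - ε) k
        · rw [hts y (fun hyi => hk (cell_unique hy hyi)), mul_zero]
        · rw [Set.indicator_of_notMem hy, zero_mul]
      rw [hzero, integral_zero]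
    · simp
  rw [hmain]
  simp [hdelta]

lemma mem_castSucc_cell (hx : StrictMono x) (hε : 0 < ε)
    (hgap : ∀ k k' : Fin m, (k' : ℕ) < (k : ℕ) → ε < x k - x k') (k : Fin m) :
    x k - ε ∈ cell m x k.castSucc := by
  simp only [cell, Set.mem_setOf_eq]
  constructor
  · intro j' hj'
    have hj2 : (j' : ℕ) < (k : ℕ) := by simpa using hj'
    have := hgap k j' hj2
    linarith
  · intro j' hj'
    have hj2 : (k : ℕ) ≤ (j' : ℕ) := by simpa using hj'
    have hle : x k ≤ x j' := hx.monotone (Fin.le_def.mpr hj2)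
    linarith

lemma mem_succ_cell_shift (hx : StrictMono x) (hε : 0 < ε)
    (hgap : ∀ k k' : Fin m, (k' : ℕ) < (k : ℕ) → ε < x k - x k') (k : Fin m) :
    x k ∈ cell m (fun j => x j - ε) k.succ := by
  simp only [cell, Set.mem_setOf_eq]
  constructor
  · intro j' hj'
    have hj2 : (j' : ℕ) ≤ (k : ℕ) := by
      simpa [Fin.val_succ, Nat.lt_succ_iff] using hj'
    have hle : x j' ≤ x k := hx.monotone (Fin.le_def.mpr hj2)
    show x j' - ε < x k
    linarith
  · intro j' hj'
    have hj2 : (k : ℕ) < (j' : ℕ) := by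
      simpa [Fin.val_succ, Nat.succ_le_iff] using hj'
    have := hgap j' k hj2
    show x k < x j' - ε
    linarith

lemma loc_Q_F (hx : StrictMono x) (hf : ∀ i, ContDiff ℝ (⊤ : ℕ∞) (f i))
    (hg : ∀ i, ContDiff ℝ (⊤ : ℕ∞) (g i)) (hG : dEq G (repDist m n x g Gc))
    (hε : 0 < ε) (hgap : ∀ k k' : Fin m, (k' : ℕ) < (k : ℕ) → ε < x k - x k')
    (i : Fin (m + 1)) {t : ℝ → ℂ} (ht : IsTest t) (hsupp : tsupport t ⊆ cell m x i) :
    Qd m n x f g Fc Gc ε t = shift ε G (fun y => f i y * t y) := by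
  have hts : ∀ y, y ∉ cell m x i → t y = 0 := fun y hy => by
    by_contra h0
    exact hy (hsupp (subset_tsupport t (by simpa [Function.mem_support] using h0)))
  rw [shift_apply hG ε (isTest_mul (hf i) ht)]
  simp only [Qd]
  have hreg : (∫ y, Freg m x f y * Freg m (fun j => x j - ε) (fun k z => g k (z + ε)) y * t y)
      = ∑ k : Fin (m + 1),
          ∫ y, (cell m (fun j => x j - ε) k).indicator (fun z => g k (z + ε)) y
            * (f i y * t y) := by
    have hfun : (fun y => Freg m x f y
          * Freg m (fun j => x j - ε) (fun k z => g k (z + ε)) y * t y)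
        = fun y => ∑ k : Fin (m + 1),
            (cell m (fun j => x j - ε) k).indicator (fun z => g k (z + ε)) y
              * (f i y * t y) := by
      funext y
      by_cases hty : t y = 0
      · simp [hty]
      · have hy : y ∈ cell m x i := by
          by_contra hc; exact hty (hts y hc)
        rw [Freg_of_mem hy, Freg, ← Finset.sum_mul]
        ring
    rw [hfun, MeasureTheory.integral_finset_sum]
    intro k _
    exact integrable_ind_mul (cell_isOpen _ _ _).measurableSet
      ((hg k).continuous.comp (continuous_id.add continuous_const))
      ((hf i).continuous.mul ht.1.continuous) ht.2.mul_left
  have hdelta : (∑ k : Fin m, ∑ j : Fin (n + 1),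
      (Fc k j * ((-1 : ℂ) ^ (j : ℕ) *
          iteratedDeriv (j : ℕ) (fun y => g k.succ (y + ε) * t y) (x k))
        + Gc k j * ((-1 : ℂ) ^ (j : ℕ) *
          iteratedDeriv (j : ℕ) (fun y => f k.castSucc y * t y) (x k - ε))))
      = ∑ k : Fin m, ∑ j : Fin (n + 1),
          Gc k j * ((-1 : ℂ) ^ (j : ℕ) *
            iteratedDeriv (j : ℕ) (fun y => f i y * t y) (x k - ε)) := by
    refine Finset.sum_congr rfl fun k _ => Finset.sum_congr rfl fun j _ => ?_
    have hxk : x k ∉ tsupport t := fun hmem => not_mem_cell m x k i (hsupp hmem)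
    have hkey : iteratedDeriv (j : ℕ) (fun y => f k.castSucc y * t y) (x k - ε)
        = iteratedDeriv (j : ℕ) (fun y => f i y * t y) (x k - ε) := by
      by_cases hk : x k - ε ∈ cell m x i
      · rw [cell_unique hk (mem_castSucc_cell hx hε hgap k)]
      · have hns : x k - ε ∉ tsupport t := fun hmem => hk (hsupp hmem)
        rw [itD_mul_tsupport hns, itD_mul_tsupport hns]
    rw [itD_mul_tsupport hxk, hkey]
    ring
  rw [hreg, hdelta]

lemma loc_Q_G (hx : StrictMono x) (hf : ∀ i, ContDiff ℝ (⊤ : ℕ∞) (f i))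
    (hg : ∀ i, ContDiff ℝ (⊤ : ℕ∞) (g i)) (hF : dEq F (repDist m n x f Fc))
    (hε : 0 < ε) (hgap : ∀ k k' : Fin m, (k' : ℕ) < (k : ℕ) → ε < x k - x k')
    (i : Fin (m + 1)) {t : ℝ → ℂ} (ht : IsTest t)
    (hsupp : tsupport t ⊆ cell m (fun j => x j - ε) i) :
    Qd m n x f g Fc Gc ε t = F (fun y => g i (y + ε) * t y) := by
  have hts : ∀ y, y ∉ cell m (fun j => x j - ε) i → t y = 0 := fun y hy => by
    by_contra h0
    exact hy (hsupp (subset_tsupport t (by simpa [Function.mem_support] using h0)))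
  have hc : ContDiff ℝ (⊤ : ℕ∞) (fun y : ℝ => g i (y + ε)) :=
    (hg i).comp (contDiff_id.add contDiff_const)
  have htest : IsTest (fun y => g i (y + ε) * t y) := isTest_mul hc ht
  rw [hF _ htest, repDist_apply]
  simp only [Qd]
  have hreg : (∫ y, Freg m x f y * Freg m (fun j => x j - ε) (fun k z => g k (z + ε)) y * t y)
      = ∑ k : Fin (m + 1),
          ∫ y, (cell m x k).indicator (f k) y * (g i (y + ε) * t y) := by
    have hfun : (fun y => Freg m x f y
          * Freg m (fun j => x j - ε) (fun k z => g k (z + ε)) y * t y)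
        = fun y => ∑ k : Fin (m + 1),
            (cell m x k).indicator (f k) y * (g i (y + ε) * t y) := by
      funext y
      by_cases hty : t y = 0
      · simp [hty]
      · have hy : y ∈ cell m (fun j => x j - ε) i := by
          by_contra hc; exact hty (hts y hc)
        rw [Freg_of_mem hy, Freg, ← Finset.sum_mul]
        ring
    rw [hfun, MeasureTheory.integral_finset_sum]
    intro k _
    exact integrable_ind_mul (cell_isOpen _ _ _).measurableSet (hf k).continuous
      (((hg i).continuous.comp (continuous_id.add continuous_const)).mul ht.1.continuous)
      ht.2.mul_left
  have hdelta : (∑ k : Fin m, ∑ j : Fin (n + 1),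
      (Fc k j * ((-1 : ℂ) ^ (j : ℕ) *
          iteratedDeriv (j : ℕ) (fun y => g k.succ (y + ε) * t y) (x k))
        + Gc k j * ((-1 : ℂ) ^ (j : ℕ) *
          iteratedDeriv (j : ℕ) (fun y => f k.castSucc y * t y) (x k - ε))))
      = ∑ k : Fin m, ∑ j : Fin (n + 1),
          Fc k j * ((-1 : ℂ) ^ (j : ℕ) *
            iteratedDeriv (j : ℕ) (fun y => g i (y + ε) * t y) (x k)) := by
    refine Finset.sum_congr rfl fun k _ => Finset.sum_congr rfl fun j _ => ?_
    have hxk : x k - ε ∉ tsupport t := fun hmem =>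
      not_mem_cell m (fun j => x j - ε) k i (hsupp hmem)
    have hkey : iteratedDeriv (j : ℕ) (fun y => g k.succ (y + ε) * t y) (x k)
        = iteratedDeriv (j : ℕ) (fun y => g i (y + ε) * t y) (x k) := by
      by_cases hk : x k ∈ cell m (fun j => x j - ε) i
      · rw [cell_unique hk (mem_succ_cell_shift hx hε hgap k)]
      · have hns : x k ∉ tsupport t := fun hmem => hk (hsupp hmem)
        rw [itD_mul_tsupport hns, itD_mul_tsupport hns]
    rw [itD_mul_tsupport hxk, hkey]
    ring
  rw [hreg, hdelta]

lemma isHProd_Qd (hx : StrictMono x) (hf : ∀ i, ContDiff ℝ (⊤ : ℕ∞) (f i))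
    (hg : ∀ i, ContDiff ℝ (⊤ : ℕ∞) (g i))
    (hF : dEq F (repDist m n x f Fc)) (hG : dEq G (repDist m n x g Gc))
    (hε : 0 < ε) (hgap : ∀ k k' : Fin m, (k' : ℕ) < (k : ℕ) → ε < x k - x k') :
    IsHProd F (shift ε G) (Qd m n x f g Fc Gc ε) := by
  intro z
  by_cases hz : ∃ k, z = x k
  · obtain ⟨k, rfl⟩ := hz
    refine ⟨cell m (fun j => x j - ε) k.succ, cell_isOpen _ _ _,
      mem_succ_cell_shift hx hε hgap k,
      Or.inr ⟨fun y => g k.succ (y + ε),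
        (hg k.succ).comp (contDiff_id.add contDiff_const), ?_, ?_⟩⟩
    · intro t ht hsupp
      exact loc_G hG k.succ ht hsupp
    · intro t ht hsupp
      exact loc_Q_G hx hf hg hF hε hgap k.succ ht hsupp
  · push_neg at hz
    obtain ⟨i, hi⟩ := exists_mem_cell hx hz
    refine ⟨cell m x i, cell_isOpen _ _ _, hi, Or.inl ⟨f i, hf i, ?_, ?_⟩⟩
    · intro t ht hsupp
      exact loc_F hF i ht hsupp
    · intro t ht hsupp
      exact loc_Q_F hx hf hg hG hε hgap i ht hsupp

lemma eventually_gap (hx : StrictMono x) :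
    ∀ᶠ ε in 𝓝[>] (0 : ℝ),
      0 < ε ∧ ∀ k k' : Fin m, (k' : ℕ) < (k : ℕ) → ε < x k - x k' := by
  have h1 : ∀ᶠ ε in 𝓝[>] (0 : ℝ), 0 < ε := eventually_mem_nhdsWithin
  have h2 : ∀ᶠ ε in 𝓝[>] (0 : ℝ), ∀ k k' : Fin m, (k' : ℕ) < (k : ℕ) → ε < x k - x k' := by
    rw [Filter.eventually_all]
    intro k
    rw [Filter.eventually_all]
    intro k'
    by_cases hkk : (k' : ℕ) < (k : ℕ)
    · have hpos : 0 < x k - x k' := sub_pos.mpr (hx (Fin.lt_def.mpr hkk))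
      have hIio : Iio (x k - x k') ∈ 𝓝 (0 : ℝ) := Iio_mem_nhds hpos
      filter_upwards [nhdsWithin_le_nhds hIio] with ε hε _
      exact hε
    · filter_upwards with ε hc
      exact absurd hc hkk
  filter_upwards [h1, h2] with ε a b
  exact ⟨a, b⟩

lemma tendsto_reg (hx : StrictMono x) (hf : ∀ i, ContDiff ℝ (⊤ : ℕ∞) (f i))
    (hg : ∀ i, ContDiff ℝ (⊤ : ℕ∞) (g i)) {t : ℝ → ℂ} (ht : IsTest t) :
    Tendsto (fun ε : ℝ =>
        ∫ y, Freg m x f y * Freg m (fun j => x j - ε) (fun k z => g k (z + ε)) y * t y)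
      (𝓝[>] (0 : ℝ)) (𝓝 (∫ y, Freg m x f y * Freg m x g y * t y)) := by
  have hK : IsCompact (tsupport t) := ht.2
  set K' : Set ℝ := (fun p : ℝ × ℝ => p.1 + p.2) '' ((tsupport t) ×ˢ Icc (0 : ℝ) 1) with hK'def
  have hK' : IsCompact K' := (hK.prod isCompact_Icc).image continuous_add
  choose Cg hCg using fun k : Fin (m + 1) =>
    hK'.exists_bound_of_continuousOn ((hg k).continuous.continuousOn)
  choose Cf hCf using fun i : Fin (m + 1) =>
    hK.exists_bound_of_continuousOn ((hf i).continuous.continuousOn)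
  refine MeasureTheory.tendsto_integral_filter_of_dominated_convergence
    (fun y => (∑ i : Fin (m + 1), Cf i) * (∑ k : Fin (m + 1), Cg k) * ‖t y‖) ?_ ?_ ?_ ?_
  · filter_upwards with ε
    exact (((Freg_measurable fun i => (hf i).continuous).mul
      (Freg_measurable fun k => (hg k).continuous.comp
        (continuous_id.add continuous_const))).mul
      ht.1.continuous.measurable).aestronglyMeasurable
  · have hev : ∀ᶠ ε in 𝓝[>] (0 : ℝ), ε ∈ Icc (0 : ℝ) 1 := by
      have h1 : ∀ᶠ ε in 𝓝[>] (0 : ℝ), 0 < ε := eventually_mem_nhdsWithin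
      have h2 : Iic (1 : ℝ) ∈ 𝓝 (0 : ℝ) := Iic_mem_nhds one_pos
      filter_upwards [h1, nhdsWithin_le_nhds h2] with ε a b
      exact ⟨le_of_lt a, b⟩
    filter_upwards [hev] with ε hε
    refine MeasureTheory.ae_of_all _ fun y => ?_
    by_cases hy : y ∈ tsupport t
    · have hyK' : y + ε ∈ K' := ⟨(y, ε), ⟨hy, hε⟩, rfl⟩
      have hFf : ‖Freg m x f y‖ ≤ ∑ i : Fin (m + 1), Cf i := by
        refine le_trans (norm_sum_le _ _) (Finset.sum_le_sum fun i _ => ?_)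
        exact le_trans (norm_indicator_le_norm_self _ _) (hCf i y hy)
      have hGg : ‖Freg m (fun j => x j - ε) (fun k z => g k (z + ε)) y‖
          ≤ ∑ k : Fin (m + 1), Cg k := by
        refine le_trans (norm_sum_le _ _) (Finset.sum_le_sum fun k _ => ?_)
        exact le_trans (norm_indicator_le_norm_self _ _) (hCg k _ hyK')
      rw [norm_mul, norm_mul]
      have hprod : ‖Freg m x f y‖ * ‖Freg m (fun j => x j - ε) (fun k z => g k (z + ε)) y‖
          ≤ (∑ i : Fin (m + 1), Cf i) * (∑ k : Fin (m + 1), Cg k) :=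
        mul_le_mul hFf hGg (norm_nonneg _) (le_trans (norm_nonneg _) hFf)
      exact mul_le_mul_of_nonneg_right hprod (norm_nonneg _)
    · have hty : t y = 0 := image_eq_zero_of_notMem_tsupport hy
      simp [hty]
  · exact (continuous_const.mul ht.1.continuous.norm).integrable_of_hasCompactSupport
      ht.2.norm.mul_left
  · have hae : ∀ᵐ y : ℝ, y ∉ Set.range x :=
      MeasureTheory.measure_eq_zero_iff_ae_notMem.mp
        (Set.Finite.measure_zero (Set.finite_range x) _)
    filter_upwards [hae] with y hy
    obtain ⟨i, hi⟩ := exists_mem_cell hx (fun k he => hy ⟨k, he.symm⟩)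
    have hev : ∀ᶠ ε in 𝓝[>] (0 : ℝ),
        Freg m (fun j => x j - ε) (fun k z => g k (z + ε)) y = g i (y + ε) := by
      have hmem : ∀ᶠ ε in 𝓝[>] (0 : ℝ), y ∈ cell m (fun j => x j - ε) i := by
        have hupper : ∀ᶠ ε in 𝓝[>] (0 : ℝ), ∀ j : Fin m, (i : ℕ) ≤ (j : ℕ) → y + ε < x j := by
          rw [Filter.eventually_all]
          intro j
          by_cases hj : (i : ℕ) ≤ (j : ℕ)
          · have hpos : 0 < x j - y := sub_pos.mpr (hi.2 j hj)
            filter_upwards [nhdsWithin_le_nhds (Iio_mem_nhds hpos)] with ε hε _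
            have hlt : ε < x j - y := hε
            linarith
          · filter_upwards with ε hc
            exact absurd hc hj
        filter_upwards [hupper, eventually_mem_nhdsWithin] with ε h2 h1
        rw [mem_cell_shift]
        refine ⟨fun j hj => ?_, h2⟩
        have hxy : x j < y := hi.1 j hj
        have hεp : (0 : ℝ) < ε := h1
        linarith
      filter_upwards [hmem] with ε hε
      exact Freg_of_mem hε
    have hcont : Tendsto (fun ε : ℝ => g i (y + ε)) (𝓝[>] (0 : ℝ)) (𝓝 (g i y)) := by
      have hadd : Tendsto (fun ε : ℝ => y + ε) (𝓝 (0 : ℝ)) (𝓝 y) := by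
        have hc' : Continuous fun ε : ℝ => y + ε := continuous_const.add continuous_id
        simpa using hc'.tendsto (0 : ℝ)
      exact ((hg i).continuous.tendsto y).comp (hadd.mono_left nhdsWithin_le_nhds)
    have hbase : Tendsto (fun ε : ℝ => Freg m x f y * g i (y + ε) * t y) (𝓝[>] (0 : ℝ))
        (𝓝 (Freg m x f y * g i y * t y)) :=
      (hcont.const_mul _).mul_const _
    have hfin : Freg m x g y = g i y := Freg_of_mem hi
    rw [hfin]
    refine Tendsto.congr' ?_ hbase
    filter_upwards [hev] with ε hε
    rw [hε]

lemma tendsto_Qd (hx : StrictMono x) (hf : ∀ i, ContDiff ℝ (⊤ : ℕ∞) (f i))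
    (hg : ∀ i, ContDiff ℝ (⊤ : ℕ∞) (g i)) {t : ℝ → ℂ} (ht : IsTest t) :
    Tendsto (fun ε : ℝ => Qd m n x f g Fc Gc ε t) (𝓝[>] (0 : ℝ))
      (𝓝 ((∫ y, Freg m x f y * Freg m x g y * t y)
        + ∑ i : Fin m, ∑ j : Fin (n + 1),
            (Fc i j * ((-1 : ℂ) ^ (j : ℕ) *
                iteratedDeriv (j : ℕ) (fun y => g i.succ y * t y) (x i))
              + Gc i j * ((-1 : ℂ) ^ (j : ℕ) *
                iteratedDeriv (j : ℕ) (fun y => f i.castSucc y * t y) (x i))))) := by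
  refine Tendsto.add (tendsto_reg hx hf hg ht) ?_
  refine tendsto_finset_sum _ fun i _ => tendsto_finset_sum _ fun j _ => Tendsto.add ?_ ?_
  · have hA : Tendsto (fun ε : ℝ =>
        iteratedDeriv (j : ℕ) (fun y => g i.succ (y + ε) * t y) (x i)) (𝓝[>] (0 : ℝ))
        (𝓝 (iteratedDeriv (j : ℕ) (fun y => g i.succ y * t y) (x i))) := by
      have hc := (contA (j : ℕ) (g i.succ) t (hg i.succ) ht.1 (x i)).tendsto (0 : ℝ)
      have h0 : (fun y => g i.succ (y + (0 : ℝ)) * t y) = fun y => g i.succ y * t y := by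
        funext y; rw [add_zero]
      rw [h0] at hc
      exact hc.mono_left nhdsWithin_le_nhds
    exact ((hA.const_mul _).const_mul _)
  · have hB : Tendsto (fun ε : ℝ =>
        iteratedDeriv (j : ℕ) (fun y => f i.castSucc y * t y) (x i - ε)) (𝓝[>] (0 : ℝ))
        (𝓝 (iteratedDeriv (j : ℕ) (fun y => f i.castSucc y * t y) (x i))) := by
      have hcont : Continuous (iteratedDeriv (j : ℕ) (fun y => f i.castSucc y * t y)) :=
        ContDiff.continuous_iteratedDeriv _ ((hf i.castSucc).mul ht.1)
          (by exact_mod_cast le_top)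
      have h2 : Tendsto (fun ε : ℝ => x i - ε) (𝓝 (0 : ℝ)) (𝓝 (x i)) := by
        have hc' : Continuous fun ε : ℝ => x i - ε := continuous_const.sub continuous_id
        simpa using hc'.tendsto (0 : ℝ)
      exact (hcont.tendsto _).comp (h2.mono_left nhdsWithin_le_nhds)
    exact ((hB.const_mul _).const_mul _)

end Main

end SEF

/-- Explicit formula for the product F*G of two elements of 𝒜. -/
theorem star_explicit_formula (m n : ℕ) (x : Fin m → ℝ) (hx : StrictMono x)
    (f g : Fin (m + 1) → ℝ → ℂ)
    (hf : ∀ i, ContDiff ℝ (⊤ : ℕ∞) (f i)) (hg : ∀ i, ContDiff ℝ (⊤ : ℕ∞) (g i))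
    (Fc Gc : Fin m → Fin (n + 1) → ℂ) (F G : SDist)
    (hF : dEq F (repDist m n x f Fc)) (hG : dEq G (repDist m n x g Gc)) :
    IsStar F G (fun t =>
      (∑ i : Fin (m + 1), ofFun ((cell m x i).indicator (fun y => f i y * g i y)) t)
      + ∑ i : Fin m, ∑ j : Fin (n + 1),
          (Fc i j * mulSmooth (g i.succ) (deltaD (j : ℕ) (x i)) t
            + Gc i j * mulSmooth (f i.castSucc) (deltaD (j : ℕ) (x i)) t)) := by
  refine ⟨SEF.Qd m n x f g Fc Gc, ?_, ?_⟩
  · filter_upwards [SEF.eventually_gap hx] with ε hε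
    exact SEF.isHProd_Qd hx hf hg hF hG hε.1 hε.2
  · intro t ht
    have h1 : (∑ i : Fin (m + 1), ofFun ((cell m x i).indicator (fun y => f i y * g i y)) t)
        = ∫ y, SEF.Freg m x f y * SEF.Freg m x g y * t y := by
      have h2 : (∑ i : Fin (m + 1), ofFun ((cell m x i).indicator (fun y => f i y * g i y)) t)
          = ∑ i : Fin (m + 1), ∫ y, (cell m x i).indicator (fun z => f i z * g i z) y * t y :=
        rfl
      rw [h2, ← MeasureTheory.integral_finset_sum]
      · congr 1
        funext y
        by_cases hy : ∃ i, y ∈ cell m x i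
        · obtain ⟨i, hi⟩ := hy
          rw [SEF.Freg_of_mem hi, SEF.Freg_of_mem hi, Finset.sum_eq_single i]
          · rw [Set.indicator_of_mem hi]
          · intro k _ hk
            rw [Set.indicator_of_notMem (fun hmem => hk (SEF.cell_unique hmem hi)), zero_mul]
          · simp
        · push_neg at hy
          rw [SEF.Freg_of_not_mem hy, SEF.Freg_of_not_mem hy, Finset.sum_eq_zero]
          · ring
          · intro k _
            rw [Set.indicator_of_notMem (hy k), zero_mul]
      · intro i _
        exact SEF.integrable_ind_mul (SEF.cell_isOpen m x i).measurableSet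
          ((hf i).continuous.mul (hg i).continuous) ht.1.continuous ht.2
    show Tendsto (fun ε => SEF.Qd m n x f g Fc Gc ε t) (𝓝[>] (0 : ℝ))
      (𝓝 ((∑ i : Fin (m + 1), ofFun ((cell m x i).indicator (fun y => f i y * g i y)) t)
        + ∑ i : Fin m, ∑ j : Fin (n + 1),
            (Fc i j * mulSmooth (g i.succ) (deltaD (j : ℕ) (x i)) t
              + Gc i j * mulSmooth (f i.castSucc) (deltaD (j : ℕ) (x i)) t)))
    rw [h1]
    exact SEF.tendsto_Qd hx hf hg ht
end
end
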